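/- Let (E, ‖·‖_∘), (E_1, ‖·‖_*), (E_2, ‖·‖_{**}) be seminormed linear spaces and (e_n)_n, (e_n^1)_n, (e_n^2)_n be spreading sequences in E, E_1 and E_2 respectively. Assume that ‖Σ_{i=1}^n a_i e_i‖_∘ ≤ ‖Σ_{i=1}^n a_i e_i^1‖_* + ‖Σ_{i=1}^n a_i e_i^2‖_{**} for every n ∈ ℕ and a_1, …, a_n ∈ ℝ. If (e_n)_n admits a lower ℓ^1-estimate of constant c > 0 and (e_n^2)_n does not admit a lower ℓ^1-estimate of any constant, then (e_n^1)_n admits a lower ℓ^1-estimate of the same constant c. -/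

import Mathlib

/-- `s : Fin k → ℕ` is the increasing enumeration of a `k`-element subset of `M`. -/
def IsEnum (M : Set ℕ) {k : ℕ} (s : Fin k → ℕ) : Prop :=
  StrictMono s ∧ ∀ i, s i ∈ M

/-- `(p j)_{j=1,…,l}` is a plegma family in `[M]^k`. -/
def IsPlegma (M : Set ℕ) {k l : ℕ} (p : Fin l → Fin k → ℕ) : Prop :=
  (∀ j, IsEnum M (p j)) ∧
  (∀ i : Fin k, StrictMono fun j : Fin l => p j i) ∧
  (∀ (i : Fin k) (hi : (i : ℕ) + 1 < k) (j j' : Fin l), p j i < p j' ⟨(i : ℕ) + 1, hi⟩)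


/-- A null sequence of positive reals. -/
def IsNullPos (δ : ℕ → ℝ) : Prop :=
  (∀ n, 0 < δ n) ∧ Filter.Tendsto δ Filter.atTop (nhds 0)

/-- The sequence `(e n)` is spreading with respect to the seminorm `ρ`:
`ρ (∑ a_i • e_i) = ρ (∑ a_i • e_{k_i})` for all strictly increasing `(k_i)`. -/
def IsSpreadingWith {E : Type*} [AddCommGroup E] [Module ℝ E]
    (ρ : Seminorm ℝ E) (e : ℕ → E) : Prop :=
  ∀ (n : ℕ) (a : Fin n → ℝ) (f : Fin n → ℕ), StrictMono f →
    ρ (∑ i, a i • e (i : ℕ)) = ρ (∑ i, a i • e (f i))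

/-- The `k`-subsequence `(x_s)_{s ∈ [M]^k}` generates `(e n)` (in the seminormed space
`(E, ρ)`) as a `k`-spreading model with respect to the null sequence `δ`: for all
`m ≤ l` (0-indexed), every plegma family `(p j)_{j=0}^{m}` in `[M]^k` whose first (hence
every) entry is `≥ M l`, and all coefficients in `[-1,1]`,
`| ‖∑ a_j • x_{p j}‖ - ρ (∑ a_j • e_j) | ≤ δ l`. The infinite set `M` is represented by
its increasing enumeration. -/
def Generates {X : Type*} [SeminormedAddCommGroup X] [NormedSpace ℝ X]
    {E : Type*} [AddCommGroup E] [Module ℝ E] (ρ : Seminorm ℝ E)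
    {k : ℕ} (x : (Fin k → ℕ) → X) (M : ℕ → ℕ) (e : ℕ → E) (δ : ℕ → ℝ) : Prop :=
  ∀ m l : ℕ, m ≤ l → ∀ p : Fin (m + 1) → Fin k → ℕ,
    IsPlegma (Set.range M) p →
    (∀ (j : Fin (m + 1)) (i : Fin k), M l ≤ p j i) →
    ∀ a : Fin (m + 1) → ℝ, (∀ j, a j ∈ Set.Icc (-1 : ℝ) 1) →
      |‖∑ j, a j • x (p j)‖ - ρ (∑ j, a j • e (j : ℕ))| ≤ δ l


/-- `(e n)` admits a lower `ℓ¹`-estimate of constant `c` with respect to the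
seminorm `ρ`. -/
def LowerL1 {E : Type*} [AddCommGroup E] [Module ℝ E]
    (ρ : Seminorm ℝ E) (e : ℕ → E) (c : ℝ) : Prop :=
  ∀ (n : ℕ) (a : Fin n → ℝ), c * ∑ i, |a i| ≤ ρ (∑ i, a i • e (i : ℕ))

/-- `(e n)` is equivalent to the usual basis of `ℓ¹` with respect to the seminorm `ρ`. -/
def EquivL1Basis {E : Type*} [AddCommGroup E] [Module ℝ E]
    (ρ : Seminorm ℝ E) (e : ℕ → E) : Prop :=
  ∃ c C : ℝ, 0 < c ∧ c ≤ C ∧ LowerL1 ρ e c ∧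
    ∀ (n : ℕ) (a : Fin n → ℝ), ρ (∑ i, a i • e (i : ℕ)) ≤ C * ∑ i, |a i|


/-- If the spreading sequences `(e n)`, `(e₁ n)`, `(e₂ n)` in
seminormed spaces satisfy `ρ (∑ aᵢ • eᵢ) ≤ ρ₁ (∑ aᵢ • e₁ᵢ) + ρ₂ (∑ aᵢ • e₂ᵢ)`, `(e n)`
admits a lower `ℓ¹`-estimate of constant `c > 0` and `(e₂ n)` admits no lower
`ℓ¹`-estimate, then `(e₁ n)` admits a lower `ℓ¹`-estimate of the same constant `c`. -/


lemma seminorm_sum_le' {E : Type*} [AddCommGroup E] [Module ℝ E]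
    (ρ : Seminorm ℝ E) {ι : Type*} (s : Finset ι) (g : ι → E) :
    ρ (∑ i ∈ s, g i) ≤ ∑ i ∈ s, ρ (g i) := by
  classical
  induction s using Finset.cons_induction with
  | empty => simp
  | cons i s hi ih =>
    rw [Finset.sum_cons, Finset.sum_cons]
    exact le_trans (map_add_le_add ρ _ _) (add_le_add (le_refl _) ih)


lemma tensor_sum {N n : ℕ} (b : Fin N → ℝ) (a : Fin n → ℝ)
    {F : Type*} [AddCommGroup F] [Module ℝ F] (v : ℕ → F)
    (q : Fin N × Fin n ≃ Fin (N * n))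
    (hCval : ∀ p : Fin N × Fin n,
      b (q.symm (q p)).1 * a (q.symm (q p)).2 = b p.1 * a p.2)
    (hqval : ∀ p : Fin N × Fin n, ((q p : ℕ)) = (p.2 : ℕ) + n * (p.1 : ℕ)) :
    (∑ k, (b (q.symm k).1 * a (q.symm k).2) • v (k : ℕ))
      = ∑ p : Fin N × Fin n, (b p.1 * a p.2) • v ((p.2 : ℕ) + n * (p.1 : ℕ)) := by
  rw [← Equiv.sum_comp q (fun k => (b (q.symm k).1 * a (q.symm k).2) • v (k : ℕ))]
  exact Finset.sum_congr rfl fun p _ => by rw [hCval, hqval]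


theorem statement13 {E E₁ E₂ : Type*} [AddCommGroup E] [Module ℝ E]
    [AddCommGroup E₁] [Module ℝ E₁] [AddCommGroup E₂] [Module ℝ E₂]
    (ρ : Seminorm ℝ E) (ρ₁ : Seminorm ℝ E₁) (ρ₂ : Seminorm ℝ E₂)
    (e : ℕ → E) (e₁ : ℕ → E₁) (e₂ : ℕ → E₂)
    (hs : IsSpreadingWith ρ e) (hs₁ : IsSpreadingWith ρ₁ e₁)
    (hs₂ : IsSpreadingWith ρ₂ e₂)
    (hineq : ∀ (n : ℕ) (a : Fin n → ℝ),
      ρ (∑ i, a i • e (i : ℕ)) ≤ ρ₁ (∑ i, a i • e₁ (i : ℕ)) + ρ₂ (∑ i, a i • e₂ (i : ℕ)))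
    (c : ℝ) (hc : 0 < c) (hlow : LowerL1 ρ e c)
    (hnot : ¬ ∃ c' : ℝ, 0 < c' ∧ LowerL1 ρ₂ e₂ c') :
    LowerL1 ρ₁ e₁ c := by
  -- Step 1: for every ε > 0 there are normalized coefficients with small ρ₂-seminorm
  have hex : ∀ ε : ℝ, 0 < ε → ∃ (N : ℕ) (b : Fin N → ℝ),
      (∑ j, |b j|) = 1 ∧ ρ₂ (∑ j, b j • e₂ (j : ℕ)) < ε := by
    intro ε hε
    by_contra hcon
    push_neg at hcon
    apply hnot
    refine ⟨ε, hε, fun N b => ?_⟩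
    by_cases hS : (∑ j, |b j|) = 0
    · rw [hS, mul_zero]; exact apply_nonneg ρ₂ _
    · have hS0 : 0 < ∑ j, |b j| :=
        lt_of_le_of_ne (Finset.sum_nonneg fun _ _ => abs_nonneg _) (Ne.symm hS)
      set S := ∑ j, |b j| with hSdef
      have h1 : (∑ j, |b j / S|) = 1 := by
        simp only [abs_div, abs_of_pos hS0, ← Finset.sum_div]
        exact div_self hS
      have h2 := hcon N (fun j => b j / S) h1
      have h3 : (∑ j, (b j / S) • e₂ (j : ℕ)) = S⁻¹ • ∑ j, b j • e₂ (j : ℕ) := by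
        rw [Finset.smul_sum]
        refine Finset.sum_congr rfl fun j _ => ?_
        rw [smul_smul, div_eq_inv_mul]
      rw [h3, map_smul_eq_mul, Real.norm_eq_abs, abs_of_pos (inv_pos.mpr hS0)] at h2
      calc ε * S ≤ (S⁻¹ * ρ₂ (∑ j, b j • e₂ (j : ℕ))) * S := by
            exact mul_le_mul_of_nonneg_right h2 hS0.le
        _ = ρ₂ (∑ j, b j • e₂ (j : ℕ)) := by field_simp
  -- Step 2: main estimate
  intro n a
  rcases Nat.eq_zero_or_pos n with hn | hn
  · subst hn; simp [apply_nonneg]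
  set A := ∑ i, |a i| with hA
  have hA0 : 0 ≤ A := Finset.sum_nonneg fun _ _ => abs_nonneg _
  rcases eq_or_lt_of_le hA0 with hA0' | hA0'
  · rw [← hA0', mul_zero]; exact apply_nonneg ρ₁ _
  -- suffices: for all ε > 0, c * A ≤ ρ₁ (...) + ε * A
  have key : ∀ ε : ℝ, 0 < ε → c * A ≤ ρ₁ (∑ i, a i • e₁ (i : ℕ)) + ε * A := by
    intro ε hε
    obtain ⟨N, b, hb1, hb2⟩ := hex ε hε
    set q := (finProdFinEquiv : Fin N × Fin n ≃ Fin (N * n)) with hq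
    have hCval : ∀ p : Fin N × Fin n,
        b (q.symm (q p)).1 * a (q.symm (q p)).2 = b p.1 * a p.2 := by
      intro p; simp
    have hqval : ∀ p : Fin N × Fin n, ((q p : ℕ)) = (p.2 : ℕ) + n * (p.1 : ℕ) := by
      intro p; simp [hq, finProdFinEquiv]
    set C : Fin (N * n) → ℝ := fun k => b (q.symm k).1 * a (q.symm k).2 with hC
    -- ∑ |C k| = A
    have hCsum : (∑ k, |C k|) = A := by
      rw [← Equiv.sum_comp q (fun k => |C k|)]
      have h5 : ∀ p : Fin N × Fin n, |C (q p)| = |b p.1| * |a p.2| := by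
        intro p; rw [hC]; simp only []; rw [hCval, abs_mul]
      rw [Finset.sum_congr rfl fun p _ => h5 p, Fintype.sum_prod_type]
      simp_rw [← Finset.mul_sum]
      rw [← Finset.sum_mul, hb1, one_mul]
    -- lower bound
    have h1 : c * A ≤ ρ (∑ k, C k • e (k : ℕ)) := by
      have := hlow (N * n) C; rwa [hCsum] at this
    -- ρ₁ bound
    have h2 : ρ₁ (∑ k, C k • e₁ (k : ℕ)) ≤ ρ₁ (∑ i, a i • e₁ (i : ℕ)) := by
      rw [hC]; simp only []
      rw [tensor_sum b a e₁ q hCval hqval, Fintype.sum_prod_type]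
      have heq : ∀ j : Fin N, (∑ i : Fin n, (b j * a i) • e₁ ((i : ℕ) + n * (j : ℕ)))
          = b j • ∑ i : Fin n, a i • e₁ ((i : ℕ) + n * (j : ℕ)) := by
        intro j; rw [Finset.smul_sum]
        exact Finset.sum_congr rfl fun i _ => by rw [smul_smul]
      rw [Finset.sum_congr rfl fun j _ => heq j]
      refine le_trans (seminorm_sum_le' ρ₁ _ _) ?_
      have hterm : ∀ j : Fin N, ρ₁ (b j • ∑ i : Fin n, a i • e₁ ((i : ℕ) + n * (j : ℕ)))
          = |b j| * ρ₁ (∑ i, a i • e₁ (i : ℕ)) := by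
        intro j
        rw [map_smul_eq_mul, Real.norm_eq_abs, ← hs₁ n a (fun i => (i : ℕ) + n * (j : ℕ))
          (fun i i' h => by simpa using h)]
      rw [Finset.sum_congr rfl fun j _ => hterm j, ← Finset.sum_mul, hb1, one_mul]
    -- ρ₂ bound
    have h3 : ρ₂ (∑ k, C k • e₂ (k : ℕ)) ≤ ε * A := by
      rw [hC]; simp only []
      rw [tensor_sum b a e₂ q hCval hqval, Fintype.sum_prod_type_right]
      have heq : ∀ i : Fin n, (∑ j : Fin N, (b j * a i) • e₂ ((i : ℕ) + n * (j : ℕ)))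
          = a i • ∑ j : Fin N, b j • e₂ ((i : ℕ) + n * (j : ℕ)) := by
        intro i; rw [Finset.smul_sum]
        exact Finset.sum_congr rfl fun j _ => by rw [smul_smul, mul_comm]
      rw [Finset.sum_congr rfl fun i _ => heq i]
      refine le_trans (seminorm_sum_le' ρ₂ _ _) ?_
      have hterm : ∀ i : Fin n, ρ₂ (a i • ∑ j : Fin N, b j • e₂ ((i : ℕ) + n * (j : ℕ)))
          = |a i| * ρ₂ (∑ j, b j • e₂ (j : ℕ)) := by
        intro i
        rw [map_smul_eq_mul, Real.norm_eq_abs, ← hs₂ N b (fun j => (i : ℕ) + n * (j : ℕ))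
          (fun j j' h =>
            Nat.add_lt_add_left ((Nat.mul_lt_mul_left hn).mpr h) _)]
      rw [Finset.sum_congr rfl fun i _ => hterm i, ← Finset.sum_mul]
      calc A * ρ₂ (∑ j, b j • e₂ (j : ℕ)) ≤ A * ε :=
            mul_le_mul_of_nonneg_left hb2.le hA0
        _ = ε * A := mul_comm _ _
    calc c * A ≤ ρ₁ (∑ k, C k • e₁ (k : ℕ)) + ρ₂ (∑ k, C k • e₂ (k : ℕ)) :=
          le_trans h1 (hineq (N * n) C)
      _ ≤ ρ₁ (∑ i, a i • e₁ (i : ℕ)) + ε * A := add_le_add h2 h3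
  -- conclude
  refine le_of_forall_pos_le_add fun η hη => ?_
  have := key (η / A) (div_pos hη hA0')
  calc c * A ≤ ρ₁ (∑ i, a i • e₁ (i : ℕ)) + (η / A) * A := this
    _ = ρ₁ (∑ i, a i • e₁ (i : ℕ)) + η := by rw [div_mul_cancel₀ _ (ne_of_gt hA0')]
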